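/- arXiv:1212.1095 — 3 statements merged into one kernel-verified Lean document; each statement's English description precedes it below -/
import Mathlib

section
/- Let p = p_k be a site, θ a unit vector, and t ∈ [0,∞). If the point y = p + tθ belongs to the Voronoi cell R_k and there exists a site p_j with j ≠ k satisfying d(y, p_k) = d(y, p_j), then y is the endpoint of the ray from p in direction θ, i.e., t = T(θ, p). -/
/-- If `y = p + tθ` (with `t ≥ 0`) belongs to the Voronoi cell `R_k` and
`d(y,p_k) = d(y,p_j)` for some site `p_j`, `j ≠ k`, then `y` is the endpoint of the ray
from `p` in direction `θ`, i.e. `t = T(θ,p)`. -/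
theorem point_in_cell_on_bisector_is_endpoint
    (n : ℕ) (hn : 2 ≤ n)
    (X : Set (EuclideanSpace ℝ (Fin 2)))
    (hXcompact : IsCompact X) (hXconvex : Convex ℝ X)
    (p : Fin n → EuclideanSpace ℝ (Fin 2))
    (hpX : ∀ k, p k ∈ X)
    (hpinj : Function.Injective p)
    (k : Fin n)
    (R : Set (EuclideanSpace ℝ (Fin 2)))
    (hR : R = {x | x ∈ X ∧ ∀ j, j ≠ k → dist x (p k) ≤ dist x (p j)})
    (θ : EuclideanSpace ℝ (Fin 2)) (hθ : ‖θ‖ = 1)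
    (T : ℝ)
    (hT : T = sSup {t : ℝ | 0 ≤ t ∧ p k + t • θ ∈ X ∧
        ∀ j, j ≠ k → dist (p k + t • θ) (p k) ≤ dist (p k + t • θ) (p j)})
    (t : ℝ) (ht : 0 ≤ t)
    (y : EuclideanSpace ℝ (Fin 2)) (hy : y = p k + t • θ)
    (hyR : y ∈ R)
    (hbis : ∃ j, j ≠ k ∧ dist y (p k) = dist y (p j)) :
    t = T := by
  obtain ⟨j, hjk, heq⟩ := hbis
  rw [hR] at hyR
  obtain ⟨hyX, hyd⟩ := hyR
  set S : Set ℝ := {t : ℝ | 0 ≤ t ∧ p k + t • θ ∈ X ∧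
      ∀ j, j ≠ k → dist (p k + t • θ) (p k) ≤ dist (p k + t • θ) (p j)} with hS
  have htS : t ∈ S := ⟨ht, hy ▸ hyX, fun j hj => hy ▸ hyd j hj⟩
  have hc : (0:ℝ) < ‖p k - p j‖ ^ 2 := by
    have h0 : (0:ℝ) < ‖p k - p j‖ :=
      norm_sub_pos_iff.mpr (fun h => hjk (hpinj h).symm)
    positivity
  -- distances along the ray
  have key : ∀ s : ℝ, 0 ≤ s →
      dist (p k + s • θ) (p j) ^ 2 =
        ‖p k - p j‖ ^ 2 + 2 * s * (inner ℝ (p k - p j) θ : ℝ) + s ^ 2 ∧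
      dist (p k + s • θ) (p k) ^ 2 = s ^ 2 := by
    intro s hs
    constructor
    · rw [dist_eq_norm]
      have h1 : p k + s • θ - p j = (p k - p j) + s • θ := by abel
      rw [h1, norm_add_sq_real, real_inner_smul_right, norm_smul]
      simp [hθ, abs_of_nonneg hs, mul_pow]
      ring
    · rw [dist_eq_norm]
      have h1 : p k + s • θ - p k = s • θ := by abel
      rw [h1, norm_smul]
      simp [hθ, abs_of_nonneg hs, mul_pow]
  have ht0 : 0 < t := by
    rcases lt_or_eq_of_le ht with h | h
    · exact h
    · exfalso
      subst hy
      rw [← h] at heq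
      simp at heq
      exact hjk (hpinj heq.symm)
  -- from heq : at t, equal distances
  have heqt : ‖p k - p j‖ ^ 2 + 2 * t * (inner ℝ (p k - p j) θ : ℝ) = 0 := by
    obtain ⟨h1, h2⟩ := key t ht
    have := heq
    rw [hy] at this
    have hsq : dist (p k + t • θ) (p k) ^ 2 = dist (p k + t • θ) (p j) ^ 2 := by
      rw [this]
    rw [h1, h2] at hsq
    linarith
  -- t is an upper bound of S
  have hub : ∀ s ∈ S, s ≤ t := by
    intro s hsS
    by_contra hst
    push_neg at hst
    obtain ⟨hs0, hsX, hsd⟩ := hsS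
    have hd := hsd j hjk
    obtain ⟨h1, h2⟩ := key s hs0
    have hsq : dist (p k + s • θ) (p k) ^ 2 ≤ dist (p k + s • θ) (p j) ^ 2 := by
      apply pow_le_pow_left₀ dist_nonneg hd
    rw [h1, h2] at hsq
    nlinarith [hsq, heqt, hc, hst, ht0]
  have hbdd : BddAbove S := ⟨t, hub⟩
  have hne : S.Nonempty := ⟨t, htS⟩
  rw [hT]
  exact le_antisymm (le_csSup hbdd htS) (csSup_le hne hub)
end

section
/- Let p and a be two distinct points in ℝ² and let y be a point with d(y, a) < d(y, p). Then the closed segment [p, y] intersects the bisector {x ∈ ℝ² : d(x, p) = d(x, a)} in exactly one point. -/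
/-- If `p ≠ a` and `d(y,a) < d(y,p)`, then the closed segment `[p,y]`
intersects the bisector `{x : d(x,p) = d(x,a)}` in exactly one point. -/
theorem segment_inter_bisector_unique
    (p a y : EuclideanSpace ℝ (Fin 2))
    (hpa : p ≠ a)
    (hy : dist y a < dist y p) :
    ∃! x : EuclideanSpace ℝ (Fin 2),
      x ∈ segment ℝ p y ∩ {x | dist x p = dist x a} := by
  set v := y - p with hv
  set c : ℝ := inner ℝ v (p - a) with hc
  set b : ℝ := ‖p - a‖ ^ 2 with hb
  have hpa' : p - a ≠ 0 := sub_ne_zero.2 hpa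
  have hbpos : 0 < b := by
    have : 0 < ‖p - a‖ := norm_pos_iff.2 hpa'
    positivity
  -- key formula
  have key : ∀ t : ℝ, dist (p + t • v) a ^ 2 = dist (p + t • v) p ^ 2 + (2 * t * c + b) := by
    intro t
    have h1 : p + t • v - a = t • v + (p - a) := by abel
    have h2 : p + t • v - p = t • v := by abel
    rw [dist_eq_norm, dist_eq_norm, h1, h2, norm_add_sq_real, real_inner_smul_left]
    ring
  -- at t = 1
  have h1 : (1 : ℝ) • v + p = y := by simp [hv]
  have hylt : 2 * 1 * c + b < 0 := by
    have := key 1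
    have hy' : p + (1 : ℝ) • v = y := by rw [add_comm]; exact h1
    rw [hy'] at this
    nlinarith [dist_nonneg (x := y) (y := a), dist_nonneg (x := y) (y := p)]
  have hcneg : c < 0 := by nlinarith
  have hcne : c ≠ 0 := ne_of_lt hcneg
  -- bisector condition
  have bis : ∀ t : ℝ, dist (p + t • v) p = dist (p + t • v) a ↔ 2 * t * c + b = 0 := by
    intro t
    constructor
    · intro h
      have := key t
      rw [h] at this
      linarith
    · intro h
      have h2 := key t
      rw [h, add_zero] at h2
      exact (sq_eq_sq₀ dist_nonneg dist_nonneg).mp h2.symm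
  set t0 : ℝ := b / (-2 * c) with ht0
  have ht0pos : 0 < t0 := by
    apply div_pos hbpos; linarith
  have ht0lt : t0 < 1 := by
    rw [ht0, div_lt_one (by linarith)]
    linarith
  have hroot : 2 * t0 * c + b = 0 := by
    have h3 : t0 * (-2 * c) = b := by
      rw [ht0]; exact div_mul_cancel₀ b (by intro h; apply hcne; linarith)
    linear_combination -h3
  refine ⟨p + t0 • v, ⟨?_, (bis t0).2 hroot⟩, ?_⟩
  · rw [segment_eq_image']
    exact ⟨t0, ⟨le_of_lt ht0pos, le_of_lt ht0lt⟩, rfl⟩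
  · rintro x ⟨hxseg, hxbis⟩
    rw [segment_eq_image'] at hxseg
    obtain ⟨t, _, rfl⟩ := hxseg
    have := (bis t).1 hxbis
    have : t = t0 := by
      have h2 : 2 * t * c = 2 * t0 * c := by linarith
      have := mul_left_cancel₀ (b := t) (c := t0) (two_ne_zero) ?_
      · exact this
      · exact mul_right_cancel₀ hcne (by linarith)
    rw [this]
end

section
/- Let p = p_k be a site lying in the interior of its Voronoi cell R_k, let θ_1 and θ_2 be linearly independent unit vectors, and set T_i = T(θ_i, p)θ_i for i = 1, 2. Suppose there is a line L such that both endpoints p + T_1 and p + T_2 lie on L, the cell R_k is contained in one of the two closed halfplanes bounded by L, and p ∉ L. Then every extreme point of R_k that lies in the cone {p + μ_1 T_1 + μ_2 T_2 : μ_1 ≥ 0, μ_2 ≥ 0} is equal to p + T_1 or to p + T_2. -/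
open scoped RealInnerProductSpace

set_option maxHeartbeats 1600000 in
/-- Let `p = p_k` lie in the interior of its Voronoi cell `R_k`, let
`θ₁, θ₂` be linearly independent unit vectors and `T_i = T(θ_i,p)θ_i`. If there is a line
`L` containing both endpoints `p + T₁` and `p + T₂` such that `R_k` lies in one of the two
closed halfplanes bounded by `L` and `p ∉ L`, then every extreme point (vertex) of `R_k`
lying in the cone `{p + μ₁T₁ + μ₂T₂ : μ₁, μ₂ ≥ 0}` equals `p + T₁` or `p + T₂`. -/
theorem vertices_in_cone_are_endpoints_same_facet
    (n : ℕ) (hn : 2 ≤ n)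
    (X : Set (EuclideanSpace ℝ (Fin 2)))
    (hXcompact : IsCompact X) (hXconvex : Convex ℝ X)
    (p : Fin n → EuclideanSpace ℝ (Fin 2))
    (hpX : ∀ k, p k ∈ X)
    (hpinj : Function.Injective p)
    (k : Fin n)
    (R : Set (EuclideanSpace ℝ (Fin 2)))
    (hR : R = {x | x ∈ X ∧ ∀ j, j ≠ k → dist x (p k) ≤ dist x (p j)})
    (hpint : p k ∈ interior R)
    (θ₁ θ₂ : EuclideanSpace ℝ (Fin 2))
    (hθ₁ : ‖θ₁‖ = 1) (hθ₂ : ‖θ₂‖ = 1)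
    (hind : LinearIndependent ℝ ![θ₁, θ₂])
    (Tfun : EuclideanSpace ℝ (Fin 2) → ℝ)
    (hTfun : ∀ θ, ‖θ‖ = 1 →
      Tfun θ = sSup {t : ℝ | 0 ≤ t ∧ p k + t • θ ∈ X ∧
        ∀ j, j ≠ k → dist (p k + t • θ) (p k) ≤ dist (p k + t • θ) (p j)})
    (T₁ T₂ : EuclideanSpace ℝ (Fin 2))
    (hT₁ : T₁ = Tfun θ₁ • θ₁) (hT₂ : T₂ = Tfun θ₂ • θ₂)
    (N : EuclideanSpace ℝ (Fin 2)) (hN : N ≠ 0) (c : ℝ)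
    (L : Set (EuclideanSpace ℝ (Fin 2)))
    (hL : L = {x | ⟪N, x⟫ = c})
    (hend₁ : p k + T₁ ∈ L) (hend₂ : p k + T₂ ∈ L)
    (hhalf : R ⊆ {x | ⟪N, x⟫ ≤ c} ∨ R ⊆ {x | c ≤ ⟪N, x⟫})
    (hpL : p k ∉ L) :
    ∀ v ∈ Set.extremePoints ℝ R,
      v ∈ {x | ∃ μ₁ μ₂ : ℝ, 0 ≤ μ₁ ∧ 0 ≤ μ₂ ∧ x = p k + μ₁ • T₁ + μ₂ • T₂} →
      v = p k + T₁ ∨ v = p k + T₂ := by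
  have hRset : R = X ∩ ⋂ j ∈ {j : Fin n | j ≠ k}, {x | dist x (p k) ≤ dist x (p j)} := by
    rw [hR]; ext x; simp [Set.mem_iInter]
  have hRclosed : IsClosed R := by
    rw [hRset]
    exact hXcompact.isClosed.inter (isClosed_biInter fun j _ =>
      isClosed_le (Continuous.dist continuous_id continuous_const)
        (Continuous.dist continuous_id continuous_const))
  have hRconvex : Convex ℝ R := by
    have heq : ∀ a : EuclideanSpace ℝ (Fin 2),
        {x : EuclideanSpace ℝ (Fin 2) | dist x (p k) ≤ dist x a} =
        {x : EuclideanSpace ℝ (Fin 2) | ⟪a - p k, x⟫ ≤ (‖a‖ ^ 2 - ‖p k‖ ^ 2) / 2} := by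
      intro a; ext x
      simp only [Set.mem_setOf_eq]
      rw [dist_eq_norm, dist_eq_norm,
        ← pow_le_pow_iff_left₀ (norm_nonneg (x - p k)) (norm_nonneg (x - a)) two_ne_zero,
        norm_sub_sq_real, norm_sub_sq_real, inner_sub_left]
      constructor <;> intro h <;>
        linarith [real_inner_comm x (p k), real_inner_comm x a]
    rw [hRset]
    refine hXconvex.inter (convex_iInter fun j => convex_iInter fun _ => ?_)
    rw [heq (p j)]
    exact convex_halfSpace_le
      ⟨fun x y => inner_add_right _ _ _, fun r x => real_inner_smul_right _ _ _⟩ _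
  obtain ⟨ε, hε, hεR⟩ : ∃ ε > 0, Metric.ball (p k) ε ⊆ R := by
    rcases Metric.isOpen_iff.1 isOpen_interior (p k) hpint with ⟨ε, hε, hsub⟩
    exact ⟨ε, hε, hsub.trans interior_subset⟩
  obtain ⟨Cr, hCr⟩ := hXcompact.isBounded.subset_closedBall (p k)
  have hqR : p k ∈ R := interior_subset hpint
  -- the endpoint lies in the cell and Tfun is positive
  have key : ∀ θ : EuclideanSpace ℝ (Fin 2), ‖θ‖ = 1 →
      p k + Tfun θ • θ ∈ R ∧ 0 < Tfun θ := by
    intro θ hθ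
    set S : Set ℝ := {t : ℝ | 0 ≤ t ∧ p k + t • θ ∈ X ∧
        ∀ j, j ≠ k → dist (p k + t • θ) (p k) ≤ dist (p k + t • θ) (p j)} with hS
    have hSR : ∀ t : ℝ, t ∈ S ↔ (0 ≤ t ∧ p k + t • θ ∈ R) := by
      intro t; rw [hR]; simp [hS, and_assoc]
    have hdist : ∀ t : ℝ, 0 ≤ t → dist (p k + t • θ) (p k) = t := by
      intro t ht
      rw [dist_eq_norm]
      simp [norm_smul, hθ, abs_of_nonneg ht]
    have hhalfmem : ε / 2 ∈ S := by
      refine (hSR _).mpr ⟨by positivity, hεR ?_⟩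
      rw [Metric.mem_ball, hdist _ (by positivity)]
      linarith
    have hbdd : BddAbove S := by
      refine ⟨Cr, fun t ht => ?_⟩
      have h1 := Metric.mem_closedBall.1 (hCr ht.2.1)
      rw [hdist _ ht.1] at h1
      exact h1
    have hScl : IsClosed S := by
      have hSeq : S = Set.Ici 0 ∩ (fun t : ℝ => p k + t • θ) ⁻¹' R := by
        ext t; rw [hSR t]; rfl
      rw [hSeq]
      exact isClosed_Ici.inter (hRclosed.preimage (continuous_const.add (continuous_id.smul continuous_const)))
    have hmem : sSup S ∈ S := hScl.csSup_mem ⟨ε / 2, hhalfmem⟩ hbdd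
    have hT : Tfun θ = sSup S := hTfun θ hθ
    rw [hSR (sSup S)] at hmem
    refine ⟨by rw [hT]; exact hmem.2, ?_⟩
    have := le_csSup hbdd hhalfmem
    rw [hT]; linarith
  obtain ⟨he₁, ht₁⟩ := key θ₁ hθ₁
  obtain ⟨he₂, ht₂⟩ := key θ₂ hθ₂
  rw [← hT₁] at he₁
  rw [← hT₂] at he₂
  have hθ₁0 : θ₁ ≠ 0 := by intro h; rw [h] at hθ₁; simp at hθ₁
  have hT₁₂ : T₁ ≠ T₂ := by
    intro h
    obtain ⟨-, h2⟩ := linearIndependent_fin2.mp hind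
    apply h2 (Tfun θ₂ / Tfun θ₁)
    have h3 : (Tfun θ₁)⁻¹ • (Tfun θ₂ • θ₂) = (Tfun θ₁)⁻¹ • (Tfun θ₁ • θ₁) := by
      rw [hT₁, hT₂] at h; rw [h]
    rw [smul_smul, smul_smul, inv_mul_cancel₀ (ne_of_gt ht₁), one_smul] at h3
    simpa [div_eq_inv_mul, Matrix.cons_val_one, Matrix.head_cons, Matrix.cons_val_zero] using h3
  intro v hv hvcone
  obtain ⟨μ₁, μ₂, hμ₁, hμ₂, hveq⟩ := hvcone
  rw [mem_extremePoints] at hv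
  have hvR : v ∈ R := hv.1
  -- inner product facts
  have hc₁ : ⟪N, p k⟫ + ⟪N, T₁⟫ = c := by
    have h := hend₁; rw [hL] at h
    simp only [Set.mem_setOf_eq, inner_add_right] at h; exact h
  have hc₂ : ⟪N, p k⟫ + ⟪N, T₂⟫ = c := by
    have h := hend₂; rw [hL] at h
    simp only [Set.mem_setOf_eq, inner_add_right] at h; exact h
  set d : ℝ := c - ⟪N, p k⟫ with hdd
  have hdT₁ : ⟪N, T₁⟫ = d := by rw [hdd]; linarith
  have hdT₂ : ⟪N, T₂⟫ = d := by rw [hdd]; linarith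
  have hd0 : d ≠ 0 := by
    intro h
    apply hpL
    rw [hL]
    simp only [Set.mem_setOf_eq]
    rw [hdd] at h; linarith
  have hvinner : ⟪N, v⟫ = ⟪N, p k⟫ + (μ₁ + μ₂) * d := by
    rw [hveq]
    simp only [inner_add_right, real_inner_smul_right, hdT₁, hdT₂]
    ring
  have hsum1 : μ₁ + μ₂ ≤ 1 := by
    rcases hhalf with h | h
    · have h1 := h hvR; have h2 := h hqR
      simp only [Set.mem_setOf_eq] at h1 h2
      have hdpos : 0 < d := lt_of_le_of_ne (by rw [hdd]; linarith) (Ne.symm hd0)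
      nlinarith
    · have h1 := h hvR; have h2 := h hqR
      simp only [Set.mem_setOf_eq] at h1 h2
      have hdneg : d < 0 := lt_of_le_of_ne (by rw [hdd]; linarith) hd0
      nlinarith
  rcases eq_or_lt_of_le (by linarith : (0 : ℝ) ≤ μ₁ + μ₂) with hs0 | hspos
  · -- μ₁ = μ₂ = 0 : v = p k, impossible for an extreme point (p k is interior)
    exfalso
    have hμ₁0 : μ₁ = 0 := by linarith
    have hμ₂0 : μ₂ = 0 := by linarith
    have hvq : v = p k := by rw [hveq, hμ₁0, hμ₂0]; simp
    have hmem₁ : p k - (ε / 2) • θ₁ ∈ R := by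
      apply hεR
      rw [Metric.mem_ball, dist_eq_norm]
      have : p k - (ε / 2) • θ₁ - p k = -((ε / 2) • θ₁) := by abel
      rw [this, norm_neg, norm_smul, hθ₁, Real.norm_eq_abs, abs_of_pos (by positivity)]
      linarith
    have hmem₂ : p k + (ε / 2) • θ₁ ∈ R := by
      apply hεR
      rw [Metric.mem_ball, dist_eq_norm]
      have : p k + (ε / 2) • θ₁ - p k = (ε / 2) • θ₁ := by abel
      rw [this, norm_smul, hθ₁, Real.norm_eq_abs, abs_of_pos (by positivity)]
      linarith
    have hseg : v ∈ openSegment ℝ (p k - (ε / 2) • θ₁) (p k + (ε / 2) • θ₁) := by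
      refine ⟨1 / 2, 1 / 2, by norm_num, by norm_num, by norm_num, ?_⟩
      rw [hvq]; module
    have h := (hv.2 _ hmem₁ _ hmem₂ hseg).1
    rw [hvq] at h
    have : (ε / 2) • θ₁ = 0 := by
      have := sub_eq_self.mp h
      exact this
    rcases smul_eq_zero.mp this with h' | h'
    · linarith
    · exact hθ₁0 h'
  rcases lt_or_eq_of_le hsum1 with hslt | hseq
  · -- 0 < μ₁+μ₂ < 1 : contradiction
    exfalso
    set s := μ₁ + μ₂ with hsdef
    clear_value s
    have hsne : s ≠ 0 := ne_of_gt hspos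
    have hab : μ₁ / s + μ₂ / s = 1 := by
      rw [← add_div, ← hsdef, div_self hsne]
    set w := (μ₁ / s) • (p k + T₁) + (μ₂ / s) • (p k + T₂) with hw
    have hwR : w ∈ R := hRconvex he₁ he₂ (div_nonneg hμ₁ hspos.le)
      (div_nonneg hμ₂ hspos.le) hab
    have hveq' : v = (1 - s) • p k + s • w := by
      rw [hveq, hw]
      match_scalars <;> field_simp <;> linarith [hsdef]
    have hseg : v ∈ openSegment ℝ (p k) w :=
      ⟨1 - s, s, by linarith, hspos, by ring, hveq'.symm⟩
    have h := (hv.2 _ hqR _ hwR hseg).1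
    have : ⟪N, v⟫ = ⟪N, p k⟫ := by rw [← h]
    rw [hvinner] at this
    have : s * d = 0 := by linarith
    rcases mul_eq_zero.mp this with h' | h'
    · exact hsne h'
    · exact hd0 h'
  · -- μ₁ + μ₂ = 1
    by_cases h1 : μ₁ = 0
    · right
      have h2 : μ₂ = 1 := by linarith
      rw [hveq, h1, h2]; module
    by_cases h2 : μ₂ = 0
    · left
      have h1' : μ₁ = 1 := by linarith
      rw [hveq, h1', h2]; module
    · exfalso
      have hseg : v ∈ openSegment ℝ (p k + T₁) (p k + T₂) := by
        refine ⟨μ₁, μ₂, lt_of_le_of_ne hμ₁ (Ne.symm h1), lt_of_le_of_ne hμ₂ (Ne.symm h2),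
          hseq, ?_⟩
        rw [hveq]
        match_scalars <;> linarith
      obtain ⟨ha, hb⟩ := hv.2 _ he₁ _ he₂ hseg
      apply hT₁₂
      have : p k + T₁ = p k + T₂ := by rw [ha, hb]
      exact add_left_cancel this
end
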